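/- The characteristic function Δ(0,λ) = 3·(c(iλ) − c(−iλ)) admits the convergent expansions Δ(0,λ) = 6·∑_{n=1}^{∞} (iλ)^{6n−3}/(6n−3)! (a power series converging for all λ ∈ ℂ) and the Hadamard product expansion Δ(0,λ) = −i·λ³·∏_{n=1}^{∞} (1 − λ⁶/(2nπ)⁶), where the infinite product converges for every λ ∈ ℂ. -/

import Mathlib

open Complex

/-- ω = exp(2πi/3), a primitive cube root of unity. -/
noncomputable def ω : ℂ := Complex.exp (2 * Real.pi * Complex.I / 3)

/-- c(z) = (1/3)·∑_{k=1}^{3} exp(ω^k z). -/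
noncomputable def cf (z : ℂ) : ℂ :=
  (1/3) * (Complex.exp (ω ^ 1 * z) + Complex.exp (ω ^ 2 * z) + Complex.exp (ω ^ 3 * z))

/-- s(z) = (1/3)·∑_{k=1}^{3} ω^{-k} exp(ω^k z). -/
noncomputable def sf (z : ℂ) : ℂ :=
  (1/3) * ((ω ^ 1)⁻¹ * Complex.exp (ω ^ 1 * z) + (ω ^ 2)⁻¹ * Complex.exp (ω ^ 2 * z) +
    (ω ^ 3)⁻¹ * Complex.exp (ω ^ 3 * z))

/-- d(z) = (1/3)·∑_{k=1}^{3} ω^k exp(ω^k z). -/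
noncomputable def df (z : ℂ) : ℂ :=
  (1/3) * (ω ^ 1 * Complex.exp (ω ^ 1 * z) + ω ^ 2 * Complex.exp (ω ^ 2 * z) +
    ω ^ 3 * Complex.exp (ω ^ 3 * z))

/-- Δ(0,λ) = 3·(c(iλ) − c(−iλ)). -/
noncomputable def Δ₀ (lam : ℂ) : ℂ := 3 * (cf (Complex.I * lam) - cf (-(Complex.I * lam)))

open Filter

lemma hω3 : ω ^ 3 = 1 := by
  rw [ω, ← Complex.exp_nat_mul]
  rw [show ((3:ℕ):ℂ) * (2 * Real.pi * Complex.I / 3) = 2 * Real.pi * Complex.I by push_cast; ring]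
  exact Complex.exp_two_pi_mul_I

lemma hωne : ω ≠ 1 := by
  rw [ω, Ne, Complex.exp_eq_one_iff]
  rintro ⟨n, hn⟩
  have hπ : (Real.pi : ℂ) ≠ 0 := by exact_mod_cast Real.pi_ne_zero
  have h1 : (1 : ℂ) = (n : ℂ) * 3 := by
    field_simp at hn
    have h2 : (2 * (Real.pi:ℂ) * I) * 1 = (2 * (Real.pi:ℂ) * I) * ((n:ℂ) * 3) := by
      linear_combination (2 * (Real.pi:ℂ) * I) * hn
    exact mul_left_cancel₀ (by simp [hπ, I_ne_zero, two_ne_zero]) h2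
  have : (1 : ℤ) = n * 3 := by exact_mod_cast h1
  omega

lemma hsum : 1 + ω + ω ^ 2 = 0 := by
  have h2 : (ω - 1) * (1 + ω + ω ^ 2) = 0 := by linear_combination hω3
  rcases mul_eq_zero.1 h2 with h3 | h3
  · exact absurd (by linear_combination h3) hωne
  · exact h3

noncomputable def Fc (z : ℂ) (m : ℕ) : ℂ :=
  (ω ^ m + ω ^ (2 * m) + 1) * (z ^ m - (-z) ^ m) / m.factorial

lemma hasSum_exp (z : ℂ) : HasSum (fun n : ℕ => z ^ n / n.factorial) (Complex.exp z) := by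
  rw [Complex.exp_eq_exp_ℂ, NormedSpace.exp_eq_tsum_div]
  exact (NormedSpace.expSeries_div_summable z).hasSum

lemma hasSum_F (lam : ℂ) : HasSum (Fc (Complex.I * lam)) (Δ₀ lam) := by
  set z := Complex.I * lam
  have H : HasSum (fun m : ℕ =>
      ((ω^1*z)^m/m.factorial - (ω^1*(-z))^m/m.factorial) +
      ((ω^2*z)^m/m.factorial - (ω^2*(-z))^m/m.factorial) +
      ((ω^3*z)^m/m.factorial - (ω^3*(-z))^m/m.factorial))
      ((Complex.exp (ω^1*z) - Complex.exp (ω^1*(-z))) +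
       (Complex.exp (ω^2*z) - Complex.exp (ω^2*(-z))) +
       (Complex.exp (ω^3*z) - Complex.exp (ω^3*(-z)))) := by
    exact (((hasSum_exp _).sub (hasSum_exp _)).add ((hasSum_exp _).sub (hasSum_exp _))).add
      ((hasSum_exp _).sub (hasSum_exp _))
  have hval : ((Complex.exp (ω^1*z) - Complex.exp (ω^1*(-z))) +
       (Complex.exp (ω^2*z) - Complex.exp (ω^2*(-z))) +
       (Complex.exp (ω^3*z) - Complex.exp (ω^3*(-z)))) = Δ₀ lam := by
    simp only [Δ₀, cf, z]
    ring_nf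
  rw [hval] at H
  refine H.congr_fun fun m => ?_
  have e2 : (ω^2)^m = ω^(2*m) := by rw [← pow_mul]
  have e3 : (ω^3)^m = 1 := by rw [hω3, one_pow]
  simp only [Fc, mul_pow, pow_one, e2, e3]
  ring

lemma F_supp (z : ℂ) (m : ℕ) (hm : ¬ ∃ n : ℕ, 6 * n + 3 = m) : Fc z m = 0 := by
  rcases Nat.even_or_odd m with he | ho
  · have : (-z) ^ m = z ^ m := he.neg_pow z
    simp [Fc, this]
  · have hodd : m % 2 = 1 := Nat.odd_iff.mp ho
    have h3 : m % 3 ≠ 0 := fun h => hm ⟨m / 6, by omega⟩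
    have hmod : ω ^ m = ω ^ (m % 3) := pow_eq_pow_mod m hω3
    have hmod2 : ω ^ (2*m) = ω ^ ((2*m) % 3) := pow_eq_pow_mod (2*m) hω3
    have hz : ω ^ m + ω ^ (2*m) + 1 = 0 := by
      rcases (by omega : m % 3 = 1 ∨ m % 3 = 2) with h | h
      · have h2 : (2*m) % 3 = 2 := by omega
        rw [hmod, hmod2, h, h2]
        linear_combination hsum
      · have h2 : (2*m) % 3 = 1 := by omega
        rw [hmod, hmod2, h, h2]
        linear_combination hsum
    simp [Fc, hz]

lemma F_val (z : ℂ) (n : ℕ) :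
    Fc z (6*n+3) = 6 * (z ^ (6*n+3) / (Nat.factorial (6*n+3) : ℂ)) := by
  have e1 : ω ^ (6*n+3) = 1 := by
    rw [show 6*n+3 = 3*(2*n+1) by ring, pow_mul, hω3, one_pow]
  have e2 : ω ^ (2*(6*n+3)) = 1 := by
    rw [show 2*(6*n+3) = 3*(2*(2*n+1)) by ring, pow_mul, hω3, one_pow]
  have e3 : (-z) ^ (6*n+3) = -(z^(6*n+3)) := Odd.neg_pow ⟨3*n+1, by ring⟩ z
  rw [Fc, e1, e2, e3]
  ring

lemma g_inj : Function.Injective (fun n : ℕ => 6 * n + 3) := fun a b h => by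
  simp only [] at h; omega

lemma F_supp_sub (z : ℂ) :
    Function.support (Fc z) ⊆ Set.range (fun n : ℕ => 6 * n + 3) := by
  intro m hm
  by_contra hc
  exact hm (F_supp z m (fun ⟨n, hn⟩ => hc ⟨n, hn⟩))

/-- The main series lemmas. -/
lemma series_summable (lam : ℂ) :
    Summable (fun n : ℕ =>
      (Complex.I * lam) ^ (6 * n + 3) / (Nat.factorial (6 * n + 3) : ℂ)) := by
  have h := ((hasSum_F lam).summable.comp_injective g_inj)
  have h2 := h.mul_left (6⁻¹ : ℂ)
  refine h2.congr fun n => ?_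
  simp only [Function.comp, F_val]
  ring

lemma series_eq (lam : ℂ) :
    Δ₀ lam = 6 * ∑' n : ℕ,
      (Complex.I * lam) ^ (6 * n + 3) / (Nat.factorial (6 * n + 3) : ℂ) := by
  have h1 : Δ₀ lam = ∑' m, Fc (Complex.I * lam) m := (hasSum_F lam).tsum_eq.symm
  rw [h1, ← g_inj.tsum_eq (F_supp_sub _)]
  rw [show (fun n : ℕ => Fc (Complex.I * lam) (6 * n + 3)) = fun n : ℕ =>
    6 * ((Complex.I * lam) ^ (6*n+3) / (Nat.factorial (6*n+3) : ℂ)) from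
    funext fun n => F_val _ n]
  exact tsum_mul_left

/- ### Product part -/

lemma key_cubic (u : ℂ) : (1-u)*(1-ω*u)*(1-ω^2*u) = 1 - u^3 := by
  linear_combination (u^2-u)*hsum + (u^2-u^3)*hω3

noncomputable def fp (lam : ℂ) (n : ℕ) : ℂ := 1 - lam ^ 6 / (2 * ((n : ℂ) + 1) * Real.pi) ^ 6

lemma multipliable_fp (lam : ℂ) : Multipliable (fp lam) := by
  by_cases hz : ∃ j, fp lam j = 0
  · obtain ⟨j, hj⟩ := hz
    refine ⟨0, ?_⟩
    have hev : ∀ᶠ s : Finset ℕ in atTop, ∏ i ∈ s, fp lam i = 0 := by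
      filter_upwards [Filter.eventually_ge_atTop {j}] with s hs
      exact Finset.prod_eq_zero (hs (Finset.mem_singleton_self j)) hj
    exact Tendsto.congr' (hev.mono fun s h => h.symm) tendsto_const_nhds
  push_neg at hz
  have hπ : (0:ℝ) < Real.pi := Real.pi_pos
  have hd : Summable (fun j : ℕ => ‖lam ^ 6 / (2 * ((j : ℂ) + 1) * Real.pi) ^ 6‖) := by
    have h6 : Summable (fun j : ℕ => (1:ℝ) / ((j:ℝ)+1) ^ 6) := by
      have := (summable_nat_add_iff (f := fun n : ℕ => (1:ℝ) / (n:ℝ) ^ 6) 1).2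
        ((Real.summable_one_div_nat_pow).2 (by norm_num))
      exact this.congr fun n => by push_cast; ring_nf
    have hs6 := h6.mul_left (‖lam‖ ^ 6 / (2 * Real.pi) ^ 6)
    refine hs6.congr fun j => ?_
    have hn : ‖2 * ((j : ℂ) + 1) * (Real.pi:ℂ)‖ = 2 * ((j:ℝ)+1) * Real.pi := by
      rw [show ((j:ℂ)+1) = ((j+1:ℕ):ℂ) by push_cast; ring, norm_mul, norm_mul,
        Complex.norm_natCast, Complex.norm_real, Real.norm_eq_abs, abs_of_pos hπ]
      push_cast
      norm_num
    rw [norm_div, norm_pow, norm_pow, hn]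
    rw [show (2*((j:ℝ)+1)*Real.pi)^6 = (2*Real.pi)^6 * (((j:ℝ)+1)^6) by ring,
      div_mul_div_comm, mul_one]
  have hlog : Summable (fun j : ℕ => Complex.log (fp lam j)) := by
    have hten : Tendsto (fun j : ℕ => ‖lam ^ 6 / (2 * ((j : ℂ) + 1) * Real.pi) ^ 6‖)
        atTop (nhds 0) := hd.tendsto_atTop_zero
    have hhalf : ∀ᶠ j : ℕ in atTop, ‖lam ^ 6 / (2 * ((j : ℂ) + 1) * Real.pi) ^ 6‖ ≤ 1/2 :=
      hten.eventually_le_const (by norm_num)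
    have hev : ∀ᶠ j : ℕ in atTop, ‖Complex.log (fp lam j)‖ ≤
        (3/2) * ‖lam ^ 6 / (2 * ((j : ℂ) + 1) * Real.pi) ^ 6‖ := by
      filter_upwards [hhalf] with j hj
      have hrw : fp lam j = 1 + (- (lam ^ 6 / (2 * ((j : ℂ) + 1) * Real.pi) ^ 6)) := by
        rw [fp]; ring
      rw [hrw]
      calc ‖Complex.log (1 + - (lam ^ 6 / (2 * ((j : ℂ) + 1) * Real.pi) ^ 6))‖
          ≤ 3/2 * ‖- (lam ^ 6 / (2 * ((j : ℂ) + 1) * Real.pi) ^ 6)‖ :=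
            Complex.norm_log_one_add_half_le_self (by rwa [norm_neg])
        _ = 3/2 * ‖lam ^ 6 / (2 * ((j : ℂ) + 1) * Real.pi) ^ 6‖ := by rw [norm_neg]
    refine Summable.of_norm_bounded_eventually (hd.mul_left (3/2)) ?_
    rwa [Nat.cofinite_eq_atTop]
  refine ⟨Complex.exp (∑' j, Complex.log (fp lam j)), ?_⟩
  have hp := hlog.hasSum.cexp
  have hfun : (fun j => Complex.exp (Complex.log (fp lam j))) = fp lam :=
    funext fun j => Complex.exp_log (hz j)
  simp only [Function.comp_def] at hp
  rwa [hfun] at hp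

lemma delta_eq_sin_prod (lam : ℂ) :
    Δ₀ lam = -8 * I * (Complex.sin (ω^1*lam/2) * Complex.sin (ω^2*lam/2) *
      Complex.sin (ω^3*lam/2)) := by
  set x1 := ω^1*I*lam/2 with hx1
  set x2 := ω^2*I*lam/2 with hx2
  set x3 := ω^3*I*lam/2 with hx3
  set a := Complex.exp x1
  set b := Complex.exp x2
  set c := Complex.exp x3
  set A := Complex.exp (-x1)
  set B := Complex.exp (-x2)
  set C := Complex.exp (-x3)
  have h1 : a * A = 1 := by rw [← Complex.exp_add, add_neg_cancel, Complex.exp_zero]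
  have h2 : b * B = 1 := by rw [← Complex.exp_add, add_neg_cancel, Complex.exp_zero]
  have h3 : c * C = 1 := by rw [← Complex.exp_add, add_neg_cancel, Complex.exp_zero]
  have h4 : a * b * c = 1 := by
    rw [← Complex.exp_add, ← Complex.exp_add,
      show x1 + x2 + x3 = 0 by
        rw [hx1, hx2, hx3]; linear_combination (I*lam/2)*hsum + (I*lam/2)*hω3,
      Complex.exp_zero]
  have h5 : A * B * C = 1 := by
    rw [← Complex.exp_add, ← Complex.exp_add,
      show -x1 + -x2 + -x3 = 0 by
        rw [hx1, hx2, hx3]; linear_combination (-I*lam/2)*hsum + (-I*lam/2)*hω3,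
      Complex.exp_zero]
  have ea : Complex.exp (ω^1*(I*lam)) = a ^ 2 := by
    rw [show ω^1*(I*lam) = 2*x1 by rw [hx1]; ring, show (2:ℂ) = ((2:ℕ):ℂ) by norm_num,
      Complex.exp_nat_mul]
  have eb : Complex.exp (ω^2*(I*lam)) = b ^ 2 := by
    rw [show ω^2*(I*lam) = 2*x2 by rw [hx2]; ring, show (2:ℂ) = ((2:ℕ):ℂ) by norm_num,
      Complex.exp_nat_mul]
  have ec : Complex.exp (ω^3*(I*lam)) = c ^ 2 := by
    rw [show ω^3*(I*lam) = 2*x3 by rw [hx3]; ring, show (2:ℂ) = ((2:ℕ):ℂ) by norm_num,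
      Complex.exp_nat_mul]
  have eA : Complex.exp (ω^1*(-(I*lam))) = A ^ 2 := by
    rw [show ω^1*(-(I*lam)) = 2*(-x1) by rw [hx1]; ring, show (2:ℂ) = ((2:ℕ):ℂ) by norm_num,
      Complex.exp_nat_mul]
  have eB : Complex.exp (ω^2*(-(I*lam))) = B ^ 2 := by
    rw [show ω^2*(-(I*lam)) = 2*(-x2) by rw [hx2]; ring, show (2:ℂ) = ((2:ℕ):ℂ) by norm_num,
      Complex.exp_nat_mul]
  have eC : Complex.exp (ω^3*(-(I*lam))) = C ^ 2 := by
    rw [show ω^3*(-(I*lam)) = 2*(-x3) by rw [hx3]; ring, show (2:ℂ) = ((2:ℕ):ℂ) by norm_num,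
      Complex.exp_nat_mul]
  have s1 : Complex.sin (ω^1*lam/2) = (A - a) * I / 2 := by
    rw [Complex.sin, show -(ω^1*lam/2) * I = -x1 by rw [hx1]; ring,
      show ω^1*lam/2 * I = x1 by rw [hx1]; ring]
  have s2 : Complex.sin (ω^2*lam/2) = (B - b) * I / 2 := by
    rw [Complex.sin, show -(ω^2*lam/2) * I = -x2 by rw [hx2]; ring,
      show ω^2*lam/2 * I = x2 by rw [hx2]; ring]
  have s3 : Complex.sin (ω^3*lam/2) = (C - c) * I / 2 := by
    rw [Complex.sin, show -(ω^3*lam/2) * I = -x3 by rw [hx3]; ring,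
      show ω^3*lam/2 * I = x3 by rw [hx3]; ring]
  have hI : I * I = -1 := Complex.I_mul_I
  rw [Δ₀, cf, cf, ea, eb, ec, eA, eB, eC, s1, s2, s3]
  linear_combination (a*B*C - A*b*c)*h1 + (A*b*C - a*B*c)*h2 + (A*B*c - a*b*C)*h3 +
    (A^2 + B^2 + C^2 - 1)*h4 + (1 - a^2 - b^2 - c^2)*h5 +
    ((I*I - 1)*(A - a)*(B - b)*(C - c))*hI

lemma product_eq (lam : ℂ) : Δ₀ lam = -Complex.I * lam ^ 3 * ∏' n : ℕ, fp lam n := by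
  have hπ : (Real.pi : ℂ) ≠ 0 := by exact_mod_cast Real.pi_ne_zero
  set z1 := ω^1 * lam / (2 * (Real.pi:ℂ)) with hz1
  set z2 := ω^2 * lam / (2 * (Real.pi:ℂ)) with hz2
  set z3 := ω^3 * lam / (2 * (Real.pi:ℂ)) with hz3
  have p1 : (Real.pi:ℂ) * z1 = ω^1 * lam / 2 := by rw [hz1]; field_simp
  have p2 : (Real.pi:ℂ) * z2 = ω^2 * lam / 2 := by rw [hz2]; field_simp
  have p3 : (Real.pi:ℂ) * z3 = ω^3 * lam / 2 := by rw [hz3]; field_simp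
  have hc : ((Real.pi:ℂ)*z1) * ((Real.pi:ℂ)*z2) * ((Real.pi:ℂ)*z3) = lam^3/8 := by
    rw [p1, p2, p3]
    linear_combination (lam^3/8 * (ω^3 + 1)) * hω3
  have hω4 : ω^4 = ω := by rw [pow_succ, hω3, one_mul]
  have hprod : ∀ j : ℕ,
      ((1:ℂ) - z1^2 / ((j:ℂ)+1)^2) * ((1:ℂ) - z2^2 / ((j:ℂ)+1)^2) *
      ((1:ℂ) - z3^2 / ((j:ℂ)+1)^2) = fp lam j := by
    intro j
    have hj : ((j:ℂ)+1) ≠ 0 := by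
      rw [show ((j:ℂ)+1) = ((j+1 : ℕ) : ℂ) by push_cast; ring]
      exact_mod_cast Nat.succ_ne_zero j
    set u := lam^2 / (2 * ((j:ℂ)+1) * (Real.pi:ℂ))^2 with hu
    have hu3 : u^3 = lam^6 / (2 * ((j:ℂ)+1) * (Real.pi:ℂ))^6 := by
      rw [hu, div_pow, ← pow_mul, ← pow_mul]
    have e1 : z1^2 / ((j:ℂ)+1)^2 = ω^2 * u := by
      rw [hz1, hu]; field_simp
    have e2 : z2^2 / ((j:ℂ)+1)^2 = ω^4 * u := by
      rw [hz2, hu]; field_simp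
    have hω6 : ω^6 = 1 := by rw [show (6:ℕ) = 3*2 from rfl, pow_mul, hω3, one_pow]
    have e3 : z3^2 / ((j:ℂ)+1)^2 = u := by
      rw [hz3, hu]
      field_simp
      linear_combination lam^2 * hω6
    rw [e1, e2, e3, hω4, fp, ← hu3, ← key_cubic u]
    ring
  have T := ((Complex.tendsto_euler_sin_prod z1).mul
    (Complex.tendsto_euler_sin_prod z2)).mul (Complex.tendsto_euler_sin_prod z3)
  have hfun : ∀ N : ℕ,
      ((Real.pi:ℂ) * z1 * ∏ j ∈ Finset.range N, ((1:ℂ) - z1^2 / ((j:ℂ)+1)^2)) *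
      ((Real.pi:ℂ) * z2 * ∏ j ∈ Finset.range N, ((1:ℂ) - z2^2 / ((j:ℂ)+1)^2)) *
      ((Real.pi:ℂ) * z3 * ∏ j ∈ Finset.range N, ((1:ℂ) - z3^2 / ((j:ℂ)+1)^2)) =
      lam^3/8 * ∏ j ∈ Finset.range N, fp lam j := by
    intro N
    calc ((Real.pi:ℂ) * z1 * ∏ j ∈ Finset.range N, ((1:ℂ) - z1^2 / ((j:ℂ)+1)^2)) *
      ((Real.pi:ℂ) * z2 * ∏ j ∈ Finset.range N, ((1:ℂ) - z2^2 / ((j:ℂ)+1)^2)) *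
      ((Real.pi:ℂ) * z3 * ∏ j ∈ Finset.range N, ((1:ℂ) - z3^2 / ((j:ℂ)+1)^2))
        = (((Real.pi:ℂ)*z1) * ((Real.pi:ℂ)*z2) * ((Real.pi:ℂ)*z3)) *
          ((∏ j ∈ Finset.range N, ((1:ℂ) - z1^2 / ((j:ℂ)+1)^2)) *
           (∏ j ∈ Finset.range N, ((1:ℂ) - z2^2 / ((j:ℂ)+1)^2)) *
           (∏ j ∈ Finset.range N, ((1:ℂ) - z3^2 / ((j:ℂ)+1)^2))) := by ring
      _ = lam^3/8 * ∏ j ∈ Finset.range N,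
           (((1:ℂ) - z1^2 / ((j:ℂ)+1)^2) * ((1:ℂ) - z2^2 / ((j:ℂ)+1)^2) *
            ((1:ℂ) - z3^2 / ((j:ℂ)+1)^2)) := by
          rw [hc, ← Finset.prod_mul_distrib, ← Finset.prod_mul_distrib]
      _ = lam^3/8 * ∏ j ∈ Finset.range N, fp lam j := by
          rw [Finset.prod_congr rfl fun j _ => hprod j]
  have T2 := T.congr hfun
  have hM := multipliable_fp lam
  have T3 := (hM.hasProd.tendsto_prod_nat).const_mul (lam^3/8)
  have huniq : lam^3/8 * ∏' n, fp lam n =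
      Complex.sin ((Real.pi:ℂ)*z1) * Complex.sin ((Real.pi:ℂ)*z2) *
        Complex.sin ((Real.pi:ℂ)*z3) := tendsto_nhds_unique T3 T2
  rw [delta_eq_sin_prod lam, show ω^1*lam/2 = (Real.pi:ℂ)*z1 from p1.symm,
    show ω^2*lam/2 = (Real.pi:ℂ)*z2 from p2.symm,
    show ω^3*lam/2 = (Real.pi:ℂ)*z3 from p3.symm, ← huniq]
  ring

/-- power-series and Hadamard product expansions of Δ(0,λ). -/
theorem stmt_18 (lam : ℂ) :
    (Summable fun n : ℕ =>
      (Complex.I * lam) ^ (6 * (n + 1) - 3) / (Nat.factorial (6 * (n + 1) - 3) : ℂ)) ∧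
    Δ₀ lam = 6 * ∑' n : ℕ,
      (Complex.I * lam) ^ (6 * (n + 1) - 3) / (Nat.factorial (6 * (n + 1) - 3) : ℂ) ∧
    (Multipliable fun n : ℕ =>
      (1 - lam ^ 6 / (2 * ((n : ℂ) + 1) * Real.pi) ^ 6)) ∧
    Δ₀ lam = -Complex.I * lam ^ 3 * ∏' n : ℕ,
      (1 - lam ^ 6 / (2 * ((n : ℂ) + 1) * Real.pi) ^ 6) := by
  have hidx : ∀ n : ℕ, 6 * (n + 1) - 3 = 6 * n + 3 := fun n => by omega
  simp only [hidx]
  exact ⟨series_summable lam, series_eq lam, multipliable_fp lam, product_eq lam⟩
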